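/- Let X be a finite nonempty set, ε ≥ 0, and let ζ ∈ Sym(X) be an involution (ζ² = Id) with d_H(ζ, Id) ≥ 1 − ε. Then there exist a finite set Y containing X with |Y| = 2·⌈|X|/2⌉ and an involution τ ∈ Sym(Y) with no fixed points such that the generalized normalized Hamming distance satisfies d_H(ζ, τ) = 1 − |{x ∈ X : ζ(x) = τ(x)}| / |Y| ≤ 2ε. -/

import Mathlib

/-- If `ζ` is an involution of a finite nonempty set `X` with `d_H(ζ, Id) ≥ 1 − ε`,
then there are a finite set `Y ⊇ X` with `|Y| = 2⌈|X|/2⌉` and a fixed-point-free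
involution `τ ∈ Sym(Y)` with generalized normalized Hamming distance
`d_H(ζ, τ) = 1 − |{x ∈ X : ζ(x) = τ(x)}|/|Y| ≤ 2ε`. -/
theorem exists_fixedPointFree_involution_close (X : Type) [Fintype X] [Nonempty X]
    (ε : ℝ) (hε : 0 ≤ ε) (ζ : Equiv.Perm X) (hζ2 : ζ * ζ = 1)
    (hd : (Nat.card {x : X // ζ x ≠ x} : ℝ) / Fintype.card X ≥ 1 - ε) :
    ∃ (Y : Type) (_ : Fintype Y) (ι : X ↪ Y) (τ : Equiv.Perm Y),
      Nat.card Y = 2 * ((Fintype.card X + 1) / 2) ∧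
      τ * τ = 1 ∧ (∀ y, τ y ≠ y) ∧
      1 - (Nat.card {x : X // ι (ζ x) = τ (ι x)} : ℝ) / Nat.card Y ≤ 2 * ε := by
  classical
  have hinv : ∀ x, ζ (ζ x) = x := fun x => by
    simpa [Equiv.Perm.mul_apply] using Equiv.ext_iff.mp hζ2 x
  set n := Fintype.card X with hn
  set p := Fintype.card {x : X // ζ x ≠ x} with hp
  set s := Fintype.card {x : X // ¬ ζ x ≠ x} with hs
  set r := 2 * ((n + 1) / 2) - n with hrdef
  have hr : n + r = 2 * ((n + 1) / 2) := by omega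
  have hps : p + s = n := by
    have := Fintype.card_congr (Equiv.sumCompl (fun x => ζ x ≠ x))
    rwa [Fintype.card_sum] at this
  -- p is even
  have hζpow : ζ ^ 2 ^ 1 = 1 := by
    simpa [pow_succ, pow_zero, sq] using hζ2
  have hmod := Equiv.Perm.card_compl_support_modEq (p := 2) (n := 1) hζpow
  have hsupp : p = ζ.support.card := by
    simp [hp, Equiv.Perm.support, Fintype.card_subtype]
  have hsupple : ζ.support.card ≤ n := Finset.card_le_univ _
  have hpeven : Even p := by
    rw [Finset.card_compl] at hmod
    have h2 : (n - ζ.support.card) % 2 = n % 2 := hmod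
    rw [hsupp, Nat.even_iff]
    omega
  obtain ⟨k, hk⟩ := hpeven
  set m := (s + r) / 2 with hmdef
  have hm : 2 * m = s + r := by omega
  -- the padding equivalence
  have hcard : Fintype.card ({x : X // ¬ ζ x ≠ x} ⊕ Fin r) = Fintype.card (Fin m × Bool) := by
    rw [Fintype.card_sum, Fintype.card_prod, Fintype.card_fin, Fintype.card_fin,
      Fintype.card_bool, ← hs]
    omega
  let e : ({x : X // ¬ ζ x ≠ x} ⊕ Fin r) ≃ (Fin m × Bool) := Fintype.equivOfCardEq hcard
  let ι : X ↪ ({x : X // ζ x ≠ x} ⊕ (Fin m × Bool)) :=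
    ((Equiv.sumCompl (fun x => ζ x ≠ x)).symm.toEmbedding).trans
      ((Function.Embedding.refl _).sumMap ((Function.Embedding.inl).trans e.toEmbedding))
  let τ : Equiv.Perm ({x : X // ζ x ≠ x} ⊕ (Fin m × Bool)) :=
    Equiv.sumCongr (ζ.subtypePerm (fun x => by rw [hinv x]; exact ne_comm))
      (Equiv.prodCongr (Equiv.refl (Fin m)) (Function.Involutive.toPerm not Bool.not_not))
  have hιpos : ∀ (x : X) (h : ζ x ≠ x), ι x = Sum.inl ⟨x, h⟩ := by
    intro x h
    simp only [ι, Function.Embedding.trans_apply, Equiv.coe_toEmbedding]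
    rw [Equiv.sumCompl_symm_apply_of_pos (p := fun x => ζ x ≠ x) h]
    rfl
  have hιneg : ∀ (x : X) (h : ¬ ζ x ≠ x), ι x = Sum.inr (e (Sum.inl ⟨x, h⟩)) := by
    intro x h
    simp only [ι, Function.Embedding.trans_apply, Equiv.coe_toEmbedding]
    rw [Equiv.sumCompl_symm_apply_of_neg (p := fun x => ζ x ≠ x) h]
    rfl
  have hY : Nat.card ({x : X // ζ x ≠ x} ⊕ (Fin m × Bool)) = n + r := by
    rw [Nat.card_eq_fintype_card, Fintype.card_sum, Fintype.card_prod, Fintype.card_fin,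
      Fintype.card_bool, ← hp]
    omega
  refine ⟨_, inferInstance, ι, τ, ?_, ?_, ?_, ?_⟩
  · rw [hY]; omega
  · ext y
    rcases y with a | ⟨i, b⟩
    · simp [τ, Equiv.Perm.mul_apply, Equiv.Perm.subtypePerm_apply, Subtype.ext_iff, hinv]
    · simp [τ]
      show (!(!b)) = b; simp
  · rintro (a | ⟨i, b⟩)
    · simp only [τ, Equiv.sumCongr_apply, Sum.map_inl, ne_eq, Sum.inl.injEq,
        Equiv.Perm.subtypePerm_apply, Subtype.ext_iff]
      exact a.2
    · simp [τ]
      show ¬ (!b) = b; simp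
  · -- the distance bound
    have hagree : ∀ x : X, (ι (ζ x) = τ (ι x)) ↔ ζ x ≠ x := by
      intro x
      by_cases hx : ζ x ≠ x
      · have hzx : ζ (ζ x) ≠ ζ x := by rw [hinv]; exact fun h => hx h.symm
        refine ⟨fun _ => hx, fun _ => ?_⟩
        rw [hιpos x hx, hιpos (ζ x) hzx]
        simp [τ, Equiv.Perm.subtypePerm_apply]
      · have hne : ι (ζ x) = τ (ι x) → False := by
          intro hcontra
          have hfix : ζ x = x := not_not.mp hx
          rw [hfix, hιneg x hx] at hcontra
          rcases htmp : e (Sum.inl ⟨x, hx⟩) with ⟨i, b⟩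
          rw [htmp] at hcontra
          simp [τ] at hcontra
          change b = !b at hcontra
          simp at hcontra
        exact ⟨fun hcontra => absurd hcontra hne, fun h' => absurd h' hx⟩
    have hcount : Nat.card {x : X // ι (ζ x) = τ (ι x)} = p := by
      rw [Nat.card_congr (Equiv.subtypeEquivRight hagree), Nat.card_eq_fintype_card]
    rw [hcount, hY]
    have hn0 : 0 < n := Fintype.card_pos
    have hn0R : (0 : ℝ) < n := by exact_mod_cast hn0
    have hd' : (1 : ℝ) - ε ≤ (p : ℝ) / n := by rwa [Nat.card_eq_fintype_card] at hd
    have h1 : (1 - ε) * n ≤ (p : ℝ) := (le_div_iff₀ hn0R).mp hd'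
    have hNR : (0 : ℝ) < ((n + r : ℕ) : ℝ) := by
      have : 0 < n + r := by omega
      exact_mod_cast this
    rw [one_sub_div hNR.ne', div_le_iff₀ hNR]
    have hr01 : r = 0 ∨ (r = 1 ∧ p + 1 ≤ n) := by omega
    rcases hr01 with h | ⟨h, hp1⟩
    · rw [h]
      push_cast
      linarith [mul_nonneg hε hn0R.le, h1]
    · rw [h]
      have hp1R : (p : ℝ) + 1 ≤ (n : ℝ) := by exact_mod_cast hp1
      push_cast
      linarith [mul_nonneg hε hn0R.le, h1, hp1R]
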